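/- Let Z₀ = λI with λ > 0, and for each t let Z_t = Z_{t−1} + Σ_{i∈S_t} g_{t,i} g_{t,i}ᵀ with g_{t,i} ∈ ℝᵖ. Suppose for every t, Σ_{i∈S_t} g_{t,i}ᵀ Z_{t−1}⁻¹ g_{t,i} ≤ 1. Then Σ_{t=1}^{T} Σ_{i∈S_t} g_{t,i}ᵀ Z_{t−1}⁻¹ g_{t,i} ≤ 2 · log( det(Z_T) / det(λI) ). -/

import Mathlib

open Matrix Finset

private lemma one_add_sum_le_prod_aux {α : Type*} (s : Finset α) (f : α → ℝ)
    (hf : ∀ i ∈ s, 0 ≤ f i) : 1 + ∑ i ∈ s, f i ≤ ∏ i ∈ s, (1 + f i) := by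
  induction s using Finset.cons_induction with
  | empty => simp
  | cons a s ha ih =>
    rw [Finset.sum_cons, Finset.prod_cons]
    have h1 : 0 ≤ f a := hf a (Finset.mem_cons_self a s)
    have h2 : ∀ i ∈ s, 0 ≤ f i := fun i hi => hf i (Finset.mem_cons.mpr (Or.inr hi))
    have h3 : 1 + ∑ i ∈ s, f i ≤ ∏ i ∈ s, (1 + f i) := ih h2
    have h4 : 0 ≤ ∑ i ∈ s, f i := Finset.sum_nonneg h2
    nlinarith

private lemma psd_vecMulVec {n : ℕ} (v : Fin n → ℝ) :
    (vecMulVec v v).PosSemidef := by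
  refine Matrix.PosSemidef.of_dotProduct_mulVec_nonneg ?_ ?_
  · ext i j
    simp [Matrix.conjTranspose_apply, vecMulVec_apply, mul_comm]
  · intro x
    have : dotProduct (star x) (vecMulVec v v *ᵥ x) = (v ⬝ᵥ x) ^ 2 := by
      simp only [dotProduct, Matrix.mulVec, vecMulVec_apply, star_trivial]
      rw [sq]
      rw [Finset.sum_mul]
      apply Finset.sum_congr rfl
      intro i _
      rw [Finset.mul_sum, Finset.mul_sum]
      apply Finset.sum_congr rfl
      intro j _
      ring
    rw [this]
    positivity

private lemma trace_mul_vecMulVec {n : ℕ} (B : Matrix (Fin n) (Fin n) ℝ) (v : Fin n → ℝ) :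
    (B * vecMulVec v v).trace = v ⬝ᵥ (B *ᵥ v) := by
  simp only [Matrix.trace, Matrix.diag_apply, Matrix.mul_apply, vecMulVec_apply,
    dotProduct, Matrix.mulVec]
  apply Finset.sum_congr rfl
  intro i _
  rw [Finset.mul_sum]
  apply Finset.sum_congr rfl
  intro j _
  ring

private lemma psd_sum {n : ℕ} {α : Type*} (s : Finset α)
    (f : α → Matrix (Fin n) (Fin n) ℝ)
    (hf : ∀ i ∈ s, (f i).PosSemidef) : (∑ i ∈ s, f i).PosSemidef := by
  induction s using Finset.cons_induction with
  | empty => simpa using Matrix.PosSemidef.zero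
  | cons a s ha ih =>
    rw [Finset.sum_cons]
    have h1 := hf a (Finset.mem_cons_self a s)
    have h2 := ih (fun i hi => hf i (Finset.mem_cons.mpr (Or.inr hi)))
    refine Matrix.PosSemidef.of_dotProduct_mulVec_nonneg (h1.1.add h2.1) fun x => ?_
    rw [Matrix.add_mulVec, dotProduct_add]
    exact add_nonneg (h1.dotProduct_mulVec_nonneg x) (h2.dotProduct_mulVec_nonneg x)

/-- `det (1 + M) ≥ 1 + trace M` for PSD `M`. -/
private lemma det_one_add_psd {n : ℕ} {M : Matrix (Fin n) (Fin n) ℝ}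
    (hM : M.PosSemidef) : 1 + M.trace ≤ (1 + M).det := by
  have hH := hM.1
  have hU1 : (hH.eigenvectorUnitary : Matrix (Fin n) (Fin n) ℝ) *
      star (hH.eigenvectorUnitary : Matrix (Fin n) (Fin n) ℝ) = 1 :=
    Matrix.mem_unitaryGroup_iff.mp hH.eigenvectorUnitary.2
  have hU2 : star (hH.eigenvectorUnitary : Matrix (Fin n) (Fin n) ℝ) *
      (hH.eigenvectorUnitary : Matrix (Fin n) (Fin n) ℝ) = 1 :=
    Matrix.mem_unitaryGroup_iff'.mp hH.eigenvectorUnitary.2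
  set U := (hH.eigenvectorUnitary : Matrix (Fin n) (Fin n) ℝ) with hUdef
  set D := Matrix.diagonal (RCLike.ofReal ∘ hH.eigenvalues : Fin n → ℝ) with hDdef
  have hspec : M = U * D * star U := hH.spectral_theorem
  have htr : M.trace = ∑ i, hH.eigenvalues i := by
    conv_lhs => rw [hspec]
    rw [Matrix.trace_mul_cycle, hU2, Matrix.one_mul, hDdef, Matrix.trace_diagonal]
    simp
  have hdet : (1 + M).det = ∏ i, (1 + hH.eigenvalues i) := by
    have h1M : (1 : Matrix (Fin n) (Fin n) ℝ) + M = U * (1 + D) * star U := by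
      rw [Matrix.mul_add, Matrix.add_mul, Matrix.mul_one, hU1, ← hspec]
    rw [h1M, Matrix.det_mul, Matrix.det_mul]
    have : U.det * (1 + D).det * (star U).det = (1 + D).det * (U * star U).det := by
      rw [Matrix.det_mul]; ring
    rw [this, hU1, Matrix.det_one, mul_one]
    have : (1 : Matrix (Fin n) (Fin n) ℝ) + D =
        Matrix.diagonal (fun i => 1 + hH.eigenvalues i) := by
      rw [hDdef, ← Matrix.diagonal_one, Matrix.diagonal_add]
      simp [Function.comp]
    rw [this, Matrix.det_diagonal]
  rw [htr, hdet]
  exact one_add_sum_le_prod_aux Finset.univ _ (fun i _ => hM.eigenvalues_nonneg i)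

open scoped MatrixOrder in
/-- Step inequality: `det A * (1 + trace (A⁻¹ * S)) ≤ det (A + S)` for PD `A`, PSD `S`. -/
private lemma det_add_psd {n : ℕ} {A S : Matrix (Fin n) (Fin n) ℝ}
    (hA : A.PosDef) (hS : S.PosSemidef) :
    A.det * (1 + (A⁻¹ * S).trace) ≤ (A + S).det := by
  set R := CFC.sqrt A with hRdef
  have hRR : R * R = A := CFC.sqrt_mul_sqrt_self A hA.posSemidef.nonneg
  have hRpsd : R.PosSemidef := (CFC.sqrt_nonneg A).posSemidef
  have hRdet : R.det ≠ 0 := by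
    have hAdet : A.det = R.det * R.det := by rw [← hRR, Matrix.det_mul]
    intro h
    rw [h, mul_zero] at hAdet
    exact hA.det_pos.ne' hAdet
  have hRunit : IsUnit R.det := isUnit_iff_ne_zero.mpr hRdet
  have hRinv : R * R⁻¹ = 1 := Matrix.mul_nonsing_inv R hRunit
  have hRinv' : R⁻¹ * R = 1 := Matrix.nonsing_inv_mul R hRunit
  have hRiH : R⁻¹.conjTranspose = R⁻¹ := by
    rw [Matrix.conjTranspose_nonsing_inv, hRpsd.1]
  set M := R⁻¹ * S * R⁻¹ with hMdef
  have hMpsd : M.PosSemidef := by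
    have := hS.mul_mul_conjTranspose_same R⁻¹
    rwa [hRiH] at this
  have hAS : A + S = R * (1 + M) * R := by
    have e1 : R * (1 + M) * R = R * R + R * M * R := by noncomm_ring
    rw [e1, hRR, hMdef]
    congr 1
    calc S = (R * R⁻¹) * S * (R⁻¹ * R) := by
            rw [hRinv, hRinv', Matrix.one_mul, Matrix.mul_one]
      _ = R * (R⁻¹ * S * R⁻¹) * R := by noncomm_ring
  have hMtr : M.trace = (A⁻¹ * S).trace := by
    rw [hMdef, Matrix.trace_mul_cycle]
    congr 2
    rw [← Matrix.mul_inv_rev, hRR]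
  have hdet : (A + S).det = A.det * (1 + M).det := by
    rw [hAS, Matrix.det_mul, Matrix.det_mul, ← hRR, Matrix.det_mul]
    ring
  rw [hdet, ← hMtr]
  exact mul_le_mul_of_nonneg_left (det_one_add_psd hMpsd) hA.det_pos.le

private lemma le_two_log (a : ℝ) (h0 : 0 ≤ a) (h1 : a ≤ 1) :
    a ≤ 2 * Real.log (1 + a) := by
  have hp : (0:ℝ) < 1 + a := by linarith
  have h := Real.log_le_sub_one_of_pos (inv_pos.mpr hp)
  rw [Real.log_inv] at h
  have hinv : (1 + a) * (1 + a)⁻¹ = 1 := mul_inv_cancel₀ hp.ne'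
  nlinarith [h, hinv]

open Matrix in
theorem elliptical_potential (p T : ℕ) (ι : Type*) (l : ℝ) (hl : 0 < l)
    (S : ℕ → Finset ι) (g : ℕ → ι → (Fin p → ℝ))
    (Z : ℕ → Matrix (Fin p) (Fin p) ℝ)
    (hZ0 : Z 0 = l • (1 : Matrix (Fin p) (Fin p) ℝ))
    (hrec : ∀ t, Z (t + 1) = Z t + ∑ i ∈ S t, vecMulVec (g t i) (g t i))
    (hbound : ∀ t, ∑ i ∈ S t, g t i ⬝ᵥ ((Z t)⁻¹ *ᵥ g t i) ≤ 1) :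
    ∑ t ∈ Finset.range T, ∑ i ∈ S t, g t i ⬝ᵥ ((Z t)⁻¹ *ᵥ g t i) ≤
      2 * Real.log ((Z T).det / (l • (1 : Matrix (Fin p) (Fin p) ℝ)).det) := by
  set a : ℕ → ℝ := fun t => ∑ i ∈ S t, g t i ⬝ᵥ ((Z t)⁻¹ *ᵥ g t i) with ha
  -- positivity of Z t
  have hPD : ∀ t, (Z t).PosDef := by
    intro t
    induction t with
    | zero =>
      rw [hZ0, Matrix.smul_one_eq_diagonal]
      exact Matrix.posDef_diagonal_iff.mpr fun _ => hl
    | succ n ih =>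
      rw [hrec n]
      exact ih.add_posSemidef (psd_sum (S n) _ fun i _ => psd_vecMulVec (g n i))
  have haS : ∀ t, (Z t)⁻¹.PosSemidef := fun t => (hPD t).inv.posSemidef
  have ha0 : ∀ t, 0 ≤ a t := by
    intro t
    refine Finset.sum_nonneg fun i _ => ?_
    have := (haS t).dotProduct_mulVec_nonneg (g t i)
    simpa using this
  -- step inequality on determinants
  have hstep : ∀ t, (Z t).det * (1 + a t) ≤ (Z (t + 1)).det := by
    intro t
    have h := det_add_psd (hPD t) (psd_sum (S t) _ fun i _ =>
      psd_vecMulVec (g t i))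
    rw [← hrec t] at h
    have htr : ((Z t)⁻¹ * ∑ i ∈ S t, vecMulVec (g t i) (g t i)).trace = a t := by
      rw [Finset.mul_sum, Matrix.trace_sum]
      exact Finset.sum_congr rfl fun i _ => trace_mul_vecMulVec _ _
    rwa [htr] at h
  -- telescoping
  have hdet0 : ∀ t, 0 < (Z t).det := fun t => (hPD t).det_pos
  have htel : ∀ t, (Z 0).det * ∏ s ∈ Finset.range t, (1 + a s) ≤ (Z t).det := by
    intro t
    induction t with
    | zero => simp
    | succ n ih =>
      rw [Finset.prod_range_succ, ← mul_assoc]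
      calc (Z 0).det * (∏ s ∈ Finset.range n, (1 + a s)) * (1 + a n)
          ≤ (Z n).det * (1 + a n) := by
            apply mul_le_mul_of_nonneg_right ih (by linarith [ha0 n])
        _ ≤ (Z (n + 1)).det := hstep n
  -- per-term log bound
  have hterm : ∀ t, a t ≤ 2 * Real.log (1 + a t) :=
    fun t => le_two_log (a t) (ha0 t) (hbound t)
  calc ∑ t ∈ Finset.range T, a t
      ≤ ∑ t ∈ Finset.range T, 2 * Real.log (1 + a t) :=
        Finset.sum_le_sum fun t _ => hterm t
    _ = 2 * Real.log (∏ t ∈ Finset.range T, (1 + a t)) := by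
        rw [Real.log_prod (fun t _ => by linarith [ha0 t] : ∀ t ∈ Finset.range T, (1:ℝ) + a t ≠ 0),
          Finset.mul_sum]
    _ ≤ 2 * Real.log ((Z T).det / (l • (1 : Matrix (Fin p) (Fin p) ℝ)).det) := by
        apply mul_le_mul_of_nonneg_left _ (by norm_num)
        apply Real.log_le_log
        · refine Finset.prod_pos fun t _ => by linarith [ha0 t]
        · rw [← hZ0, le_div_iff₀ (hdet0 0), mul_comm]
          exact htel T
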